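/- The null space of 𝒫 K equals the null space of 𝒫ᵀ, i.e., for every w ∈ ℝ^{m+n}, 𝒫 K w = 0 if and only if 𝒫ᵀ w = 0. -/

import Mathlib

open Matrix

/-- K = [[M,A],[Aᵀ,-N]] with M, N posdef has trivial kernel. -/
lemma K_mulVec_injective {m n : ℕ}
    (M : Matrix (Fin m) (Fin m) ℝ) (N : Matrix (Fin n) (Fin n) ℝ)
    (A : Matrix (Fin m) (Fin n) ℝ) (hM : M.PosDef) (hN : N.PosDef)
    (z : Fin m ⊕ Fin n → ℝ)
    (h : (Matrix.fromBlocks M A Aᵀ (-N)).mulVec z = 0) : z = 0 := by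
  set x := z ∘ Sum.inl with hx
  set y := z ∘ Sum.inr with hy
  rw [fromBlocks_mulVec] at h
  have h1 : M *ᵥ x + A *ᵥ y = 0 := by
    funext i; exact congrFun h (Sum.inl i)
  have h2 : Aᵀ *ᵥ x + (-N) *ᵥ y = 0 := by
    funext i; exact congrFun h (Sum.inr i)
  have e1 : x ⬝ᵥ (M *ᵥ x) + x ⬝ᵥ (A *ᵥ y) = 0 := by
    rw [← dotProduct_add, h1, dotProduct_zero]
  have e2 : y ⬝ᵥ (Aᵀ *ᵥ x) - y ⬝ᵥ (N *ᵥ y) = 0 := by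
    have := congrArg (fun v => y ⬝ᵥ v) h2
    simpa [dotProduct_add, neg_mulVec, sub_eq_add_neg] using this
  have cross : y ⬝ᵥ (Aᵀ *ᵥ x) = x ⬝ᵥ (A *ᵥ y) := by
    rw [dotProduct_mulVec, vecMul_transpose, dotProduct_comm]
  have hxq : (0:ℝ) ≤ x ⬝ᵥ (M *ᵥ x) := by
    simpa using hM.posSemidef.dotProduct_mulVec_nonneg x
  have hyq : (0:ℝ) ≤ y ⬝ᵥ (N *ᵥ y) := by
    simpa using hN.posSemidef.dotProduct_mulVec_nonneg y
  have hx0 : x = 0 := by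
    by_contra hne
    have := hM.dotProduct_mulVec_pos hne
    simp only [star_trivial] at this
    linarith [e1, e2, cross]
  have hy0 : y = 0 := by
    by_contra hne
    have := hN.dotProduct_mulVec_pos hne
    simp only [star_trivial] at this
    linarith [e1, e2, cross]
  funext i
  cases i with
  | inl i => exact congrFun hx0 i
  | inr i => exact congrFun hy0 i

/-- The null space of `Pcal K` equals the null space of `Pcalᵀ`. -/
theorem nullspace_PK_eq_nullspace_Pt (m n k : ℕ)
    (M : Matrix (Fin m) (Fin m) ℝ) (N : Matrix (Fin n) (Fin n) ℝ)
    (A : Matrix (Fin m) (Fin n) ℝ)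
    (hM : M.PosDef) (hN : N.PosDef)
    (Uk : Matrix (Fin m) (Fin k) ℝ) (Vk : Matrix (Fin n) (Fin k) ℝ)
    (Sig : Matrix (Fin k) (Fin k) ℝ)
    (hSigDiag : ∀ i j, i ≠ j → Sig i j = 0) (hSigNonneg : ∀ i, 0 ≤ Sig i i)
    (hUk : Ukᵀ * M * Uk = 1) (hVk : Vkᵀ * N * Vk = 1)
    (hAV : A * Vk = M * Uk * Sig) (hAU : Aᵀ * Uk = N * Vk * Sig)
    (P : Matrix (Fin m) (Fin m) ℝ) (hP : P = 1 - M * Uk * Ukᵀ)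
    (Q : Matrix (Fin n) (Fin n) ℝ) (hQ : Q = 1 - Vk * Vkᵀ * N)
    (K : Matrix (Fin m ⊕ Fin n) (Fin m ⊕ Fin n) ℝ)
    (hK : K = Matrix.fromBlocks M A Aᵀ (-N))
    (Pcal : Matrix (Fin m ⊕ Fin n) (Fin m ⊕ Fin n) ℝ)
    (hPcal : Pcal = Matrix.fromBlocks P 0 0 Qᵀ) :
    ∀ w : Fin m ⊕ Fin n → ℝ, (Pcal * K).mulVec w = 0 ↔ Pcalᵀ.mulVec w = 0 := by
  have hMsymm : Mᵀ = M := hM.isHermitian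
  have hNsymm : Nᵀ = N := hN.isHermitian
  have hSigsymm : Sigᵀ = Sig := by
    ext i j
    by_cases hij : i = j
    · subst hij; rfl
    · rw [transpose_apply, hSigDiag j i (Ne.symm hij), hSigDiag i j hij]
  have hUA : Ukᵀ * A = Sig * Vkᵀ * N := by
    have := congrArg Matrix.transpose hAU
    simpa [Matrix.transpose_mul, hNsymm, hSigsymm, Matrix.mul_assoc] using this
  have hPt : Pᵀ = 1 - Uk * Ukᵀ * M := by
    simp [hP, transpose_sub, transpose_mul, hMsymm, Matrix.mul_assoc]
  have hQt : Qᵀ = 1 - N * Vk * Vkᵀ := by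
    simp [hQ, transpose_sub, transpose_mul, hNsymm, Matrix.mul_assoc]
  have hPM : P * M = M * Pᵀ := by
    rw [hPt, hP]
    noncomm_ring
    simp [Matrix.mul_assoc]
  have hPA : P * A = A * Q := by
    rw [hP, hQ]
    have l1 : M * Uk * Ukᵀ * A = M * Uk * (Sig * Vkᵀ * N) := by
      rw [Matrix.mul_assoc (M * Uk), hUA]
    have l2 : A * (Vk * Vkᵀ * N) = M * Uk * Sig * Vkᵀ * N := by
      rw [show Vk * Vkᵀ * N = Vk * (Vkᵀ * N) from Matrix.mul_assoc _ _ _,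
        ← Matrix.mul_assoc A, hAV]
      simp [Matrix.mul_assoc]
    rw [Matrix.sub_mul, Matrix.mul_sub, Matrix.one_mul, Matrix.mul_one, l1, l2]
    simp [Matrix.mul_assoc]
  have hQN : Qᵀ * N = N * Q := by
    rw [hQt, hQ]
    noncomm_ring
    simp [Matrix.mul_assoc]
  have hAt : Qᵀ * Aᵀ = Aᵀ * Pᵀ := by
    have := congrArg Matrix.transpose hPA
    simpa [Matrix.transpose_mul] using this.symm
  have hcomm : Pcal * K = K * Pcalᵀ := by
    rw [hPcal, hK, fromBlocks_transpose, fromBlocks_multiply, fromBlocks_multiply]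
    simp [hPM, hPA, hQN, hAt, Matrix.neg_mul, Matrix.mul_neg]
  intro w
  rw [hcomm, ← Matrix.mulVec_mulVec]
  constructor
  · intro h
    exact K_mulVec_injective M N A hM hN _ (by rwa [hK] at h)
  · intro h
    rw [h, mulVec_zero]
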